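/- Let X be a totally symmetric subset of a group G with |X| = k such that every element of X has finite order. Then the subgroup generated by X is a finite abelian group of order at least 2^{k−1}. -/

import Mathlib

/-- A subset `X` of a group `G` is *totally symmetric* if its elements commute
pairwise and every permutation of `X` is realized by conjugation by an element
of `G`. -/
def IsTotallySymmetric {G : Type*} [Group G] (X : Set G) : Prop :=
  (∀ x ∈ X, ∀ y ∈ X, x * y = y * x) ∧
  ∀ σ : Equiv.Perm X, ∃ g : G, ∀ x : X, g * (x : G) * g⁻¹ = (σ x : G)

/-- If `X` is a totally symmetric subset of `G` with `|X| = k` all of whose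
elements have finite order, then the subgroup generated by `X` is a finite
abelian group of order at least `2 ^ (k - 1)`. -/
theorem stmt_3 {G : Type*} [Group G] (X : Set G) (k : ℕ)
    (hX : IsTotallySymmetric X) (hfin : X.Finite) (hcard : X.ncard = k)
    (hord : ∀ x ∈ X, IsOfFinOrder x) :
    ((Subgroup.closure X : Subgroup G) : Set G).Finite ∧
      (∀ a ∈ Subgroup.closure X, ∀ b ∈ Subgroup.closure X, a * b = b * a) ∧
      2 ^ (k - 1) ≤ Nat.card (Subgroup.closure X) := by
  classical
  -- commutativity on the closure
  have hcomm : ∀ a ∈ Subgroup.closure X, ∀ b ∈ Subgroup.closure X, a * b = b * a := by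
    intro a ha b hb
    induction ha, hb using Subgroup.closure_induction₂ with
    | mem x y hx hy => exact hX.1 x hx y hy
    | one_left x hx => simp
    | one_right x hx => simp
    | mul_left x y z hx hy hz h1 h2 =>
        rw [mul_assoc, h2, ← mul_assoc, h1, mul_assoc]
    | mul_right y z x hy hz hx h1 h2 =>
        rw [← mul_assoc, h1, mul_assoc, h2, ← mul_assoc]
    | inv_left x y hx hy h => exact (Commute.inv_left h : Commute _ _)
    | inv_right x y hx hy h => exact (Commute.inv_right h : Commute _ _)
  -- torsion on the closure
  have hordc : ∀ a ∈ Subgroup.closure X, IsOfFinOrder a := by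
    intro a ha
    induction ha using Subgroup.closure_induction with
    | mem x hx => exact hord x hx
    | one => exact IsOfFinOrder.one
    | mul x y hx hy h1 h2 =>
        exact Commute.isOfFinOrder_mul (hcomm x hx y hy) h1 h2
    | inv x hx h => exact h.inv
  letI : CommGroup ↥(Subgroup.closure X) :=
    { (inferInstance : Group ↥(Subgroup.closure X)) with
      mul_comm := fun a b => Subtype.ext (hcomm a a.2 b b.2) }
  have hFG : Group.FG ↥(Subgroup.closure X) :=
    (Group.fg_iff_subgroup_fg _).2 ((Subgroup.fg_iff _).2 ⟨X, rfl, hfin⟩)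
  have htor : Monoid.IsTorsion ↥(Subgroup.closure X) := by
    intro g
    rw [isOfFinOrder_iff_pow_eq_one]
    obtain ⟨n, hn, he⟩ := isOfFinOrder_iff_pow_eq_one.1 (hordc g g.2)
    exact ⟨n, hn, Subtype.ext (by push_cast; exact he)⟩
  haveI hfinite : Finite ↥(Subgroup.closure X) :=
    CommGroup.finite_of_fg_torsion _ htor
  refine ⟨Set.finite_coe_iff.mp hfinite, hcomm, ?_⟩
  -- cardinality bound
  rcases Nat.eq_zero_or_pos k with rfl | hk
  · exact Nat.card_pos
  set F : Finset G := hfin.toFinset with hF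
  have memX : ∀ a ∈ F, a ∈ X := fun a ha => hfin.mem_toFinset.1 ha
  have hFcard : F.card = k := by
    rw [Set.ncard_eq_toFinset_card X hfin] at hcard; exact hcard
  obtain ⟨x₀, hx₀⟩ : F.Nonempty := Finset.card_pos.1 (hFcard ▸ hk)
  set E : Finset G := F.erase x₀ with hEdef
  have hEcard : E.card = k - 1 := by rw [hEdef, Finset.card_erase_of_mem hx₀, hFcard]
  have memXE : ∀ i : {x // x ∈ E}, (i : G) ∈ X :=
    fun i => memX i (Finset.mem_of_mem_erase i.2)
  -- the product map
  set p : Finset G → ↥(Subgroup.closure X) := fun s =>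
    ∏ i ∈ E.attach, if ((i : G) ∈ s)
      then (⟨(i : G), Subgroup.subset_closure (memXE i)⟩ : ↥(Subgroup.closure X))
      else 1 with hp
  have key : ∀ s t : Finset G, s ⊆ E → t ⊆ E → p s = p t → s ⊆ t := by
    intro s t hs ht hpe a has
    by_contra hat
    have haE : a ∈ E := hs has
    have haX : a ∈ X := memX a (Finset.mem_of_mem_erase haE)
    have hx₀X : x₀ ∈ X := memX x₀ hx₀
    have hane : a ≠ x₀ := Finset.ne_of_mem_erase haE
    obtain ⟨g, hg⟩ := hX.2 (Equiv.swap (⟨a, haX⟩ : X) ⟨x₀, hx₀X⟩)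
    set σ := Equiv.swap (⟨a, haX⟩ : X) ⟨x₀, hx₀X⟩ with hσ
    have hmap : ∀ b ∈ Subgroup.closure X, g * b * g⁻¹ ∈ Subgroup.closure X := by
      intro b hb
      induction hb using Subgroup.closure_induction with
      | mem x hx =>
          rw [hg ⟨x, hx⟩]
          exact Subgroup.subset_closure (σ ⟨x, hx⟩).2
      | one => simpa using Subgroup.one_mem _
      | mul x y hx hy h1 h2 =>
          have : g * (x * y) * g⁻¹ = (g * x * g⁻¹) * (g * y * g⁻¹) := by group
          rw [this]; exact Subgroup.mul_mem _ h1 h2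
      | inv x hx h =>
          have : g * x⁻¹ * g⁻¹ = (g * x * g⁻¹)⁻¹ := by group
          rw [this]; exact Subgroup.inv_mem _ h
    set c : ↥(Subgroup.closure X) →* ↥(Subgroup.closure X) :=
      { toFun := fun h => ⟨g * h * g⁻¹, hmap h h.2⟩
        map_one' := by ext; simp
        map_mul' := fun x y => by ext; push_cast; group } with hc
    -- c fixes every generator other than a and x₀, swaps a to x₀
    have hfix : ∀ (i : G) (hiX : i ∈ X), i ≠ a → i ≠ x₀ →
        c ⟨i, Subgroup.subset_closure hiX⟩ = ⟨i, Subgroup.subset_closure hiX⟩ := by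
      intro i hiX hia hix
      refine Subtype.ext ?_
      have := hg ⟨i, hiX⟩
      rw [hσ] at *
      rw [Equiv.swap_apply_of_ne_of_ne (by simpa [Subtype.ext_iff] using hia)
        (by simpa [Subtype.ext_iff] using hix)] at this
      simpa [hc] using this
    have hswap : c ⟨a, Subgroup.subset_closure haX⟩
        = ⟨x₀, Subgroup.subset_closure hx₀X⟩ := by
      refine Subtype.ext ?_
      have := hg ⟨a, haX⟩
      rw [hσ, Equiv.swap_apply_left] at this
      simpa [hc] using this
    -- c (p t) = p t
    have hct : c (p t) = p t := by
      rw [hp]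
      rw [map_prod]
      refine Finset.prod_congr rfl ?_
      intro i _
      by_cases hit : (i : G) ∈ t
      · have hia : (i : G) ≠ a := fun h => hat (h ▸ hit)
        have hix : (i : G) ≠ x₀ := Finset.ne_of_mem_erase i.2
        simp only [hit, if_pos]
        exact hfix i (memXE i) hia hix
      · simp [hit]
    -- c (p s) differs from p s
    set a' : {x // x ∈ E} := ⟨a, haE⟩ with ha'
    have hmem : a' ∈ E.attach := Finset.mem_attach _ _
    set f : {x // x ∈ E} → ↥(Subgroup.closure X) := fun i =>
      if ((i : G) ∈ s)
      then (⟨(i : G), Subgroup.subset_closure (memXE i)⟩ : ↥(Subgroup.closure X))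
      else 1 with hf
    set q : ↥(Subgroup.closure X) := ∏ i ∈ E.attach.erase a', f i with hq
    have h2 : f a' = ⟨a, Subgroup.subset_closure haX⟩ := if_pos has
    have hps : p s = ⟨a, Subgroup.subset_closure haX⟩ * q := by
      have h1 : p s = f a' * ∏ i ∈ E.attach.erase a', f i :=
        (Finset.mul_prod_erase E.attach f hmem).symm
      exact h1.trans (by rw [h2, hq])
    have hcps : c (p s) = ⟨x₀, Subgroup.subset_closure hx₀X⟩ * q := by
      have h1 : c (p s) = ∏ i ∈ E.attach, c (f i) := map_prod c f E.attach
      have h1' : (∏ i ∈ E.attach, c (f i))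
          = c (f a') * ∏ i ∈ E.attach.erase a', c (f i) :=
        (Finset.mul_prod_erase E.attach (fun i => c (f i)) hmem).symm
      have h3 : c (f a') = ⟨x₀, Subgroup.subset_closure hx₀X⟩ := by
        rw [h2]; exact hswap
      have h4 : (∏ i ∈ E.attach.erase a', c (f i)) = q := by
        rw [hq]
        refine Finset.prod_congr rfl ?_
        intro i hi
        have hia : (i : G) ≠ a := by
          intro h
          exact (Finset.ne_of_mem_erase hi) (by rw [ha', Subtype.ext_iff]; exact h)
        have hix : (i : G) ≠ x₀ := Finset.ne_of_mem_erase i.2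
        by_cases hit : (i : G) ∈ s
        · rw [hf]
          simp only [hit, if_pos]
          exact hfix i (memXE i) hia hix
        · rw [hf]
          simp only [hit, if_neg, if_false]
          exact map_one c
      rw [h1, h1', h3, h4]
    have hcancel : (⟨x₀, Subgroup.subset_closure hx₀X⟩ : ↥(Subgroup.closure X)) * q
        = ⟨a, Subgroup.subset_closure haX⟩ * q := by
      rw [← hcps, hpe, hct, ← hpe, hps]
    have hax : (⟨x₀, Subgroup.subset_closure hx₀X⟩ : ↥(Subgroup.closure X))
        = ⟨a, Subgroup.subset_closure haX⟩ := mul_right_cancel hcancel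
    exact hane (congrArg Subtype.val hax.symm)
  have hinj : Set.InjOn p ↑E.powerset := by
    intro s hs t ht h
    rw [Finset.mem_coe, Finset.mem_powerset] at hs ht
    exact Finset.Subset.antisymm (key s t hs ht h) (key t s ht hs h.symm)
  letI := Fintype.ofFinite ↥(Subgroup.closure X)
  calc 2 ^ (k - 1) = (E.powerset.image p).card := by
        rw [Finset.card_image_of_injOn hinj, Finset.card_powerset, hEcard]
    _ ≤ Fintype.card ↥(Subgroup.closure X) := Finset.card_le_univ _
    _ = Nat.card ↥(Subgroup.closure X) := (Nat.card_eq_fintype_card).symm
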